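/- Let H, H_1, ..., H_m be finite-dimensional Euclidean spaces with dim H = n, and let L_j^0 : H → H_j be surjective linear maps. Suppose that for every subspace V ⊆ H one has dim V ≤ Σ_j p_j · dim(L_j^0 V), where p_1, ..., p_m ∈ [0,1]. Then there exists δ > 0 such that for all m-tuples of linear maps L = (L_j) with ‖L_j − L_j^0‖ < δ for each j, the same dimension condition dim V ≤ Σ_j p_j · dim(L_j V) holds for every subspace V ⊆ H. -/

import Mathlib

open Module Metric

/-- Min over a finset of positive reals. -/
lemma exists_pos_le_finset {ι : Type*} (s : Finset ι) (f : ι → ℝ)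
    (hf : ∀ i ∈ s, 0 < f i) : ∃ ε > (0:ℝ), ∀ i ∈ s, ε ≤ f i := by
  classical
  set t : Finset ℝ := insert 1 (s.image f) with ht
  have htne : t.Nonempty := ⟨1, by simp [ht]⟩
  refine ⟨t.min' htne, ?_, ?_⟩
  · show (0:ℝ) < t.min' htne
    rw [Finset.lt_min'_iff]
    intro y hy
    rw [ht, Finset.mem_insert] at hy
    rcases hy with rfl | hy
    · norm_num
    · obtain ⟨i, hi, rfl⟩ := Finset.mem_image.mp hy
      exact hf i hi
  · intro i hi
    exact Finset.min'_le _ _ (by rw [ht]; exact Finset.mem_insert_of_mem (Finset.mem_image_of_mem f hi))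

/-- Lower semicontinuity of rank. -/
lemma rank_lsc {E F : Type*} [NormedAddCommGroup E] [InnerProductSpace ℝ E]
    [FiniteDimensional ℝ E] [NormedAddCommGroup F] [NormedSpace ℝ F] [FiniteDimensional ℝ F]
    (A0 : E →L[ℝ] F) :
    ∃ ε > (0:ℝ), ∀ A : E →L[ℝ] F, ‖A - A0‖ < ε →
      finrank ℝ (LinearMap.range A0.toLinearMap) ≤ finrank ℝ (LinearMap.range A.toLinearMap) := by
  set W := (LinearMap.ker A0.toLinearMap)ᗮ with hW
  have hinj : LinearMap.ker (A0.toLinearMap ∘ₗ W.subtype) = ⊥ := by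
    rw [LinearMap.ker_eq_bot']
    intro w hw
    have hw' : A0 (w : E) = 0 := hw
    have hmem : (w : E) ∈ (LinearMap.ker A0.toLinearMap) ⊓ W := ⟨hw', w.2⟩
    have : (w : E) = 0 := by
      have h7 : (w : E) ∈ (LinearMap.ker A0.toLinearMap) ⊓ (LinearMap.ker A0.toLinearMap)ᗮ := hmem
      have := (Submodule.orthogonal_disjoint (LinearMap.ker A0.toLinearMap)).le_bot h7
      simpa using this
    exact Subtype.ext this
  obtain ⟨K, hK0, hK⟩ := LinearMap.exists_antilipschitzWith _ hinj
  have hK0' : (0:ℝ) < (K:ℝ) := hK0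
  refine ⟨(K:ℝ)⁻¹, by positivity, fun A hA => ?_⟩
  -- A is injective on W
  have hAinj : LinearMap.ker (A.toLinearMap ∘ₗ W.subtype) = ⊥ := by
    rw [LinearMap.ker_eq_bot']
    intro w hw
    have hw' : A (w : E) = 0 := hw
    by_contra hw0
    have hx0 : ((w : E) : E) ≠ 0 := fun h => hw0 (Subtype.ext h)
    have hnorm : (0:ℝ) < ‖(w : E)‖ := norm_pos_iff.mpr hx0
    have e1 : ‖(w : E)‖ ≤ (K:ℝ) * ‖A0 (w : E)‖ := by
      have := hK.le_mul_dist w 0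
      simpa [dist_eq_norm] using this
    have e2 : ‖A0 (w : E)‖ ≤ ‖A - A0‖ * ‖(w : E)‖ := by
      have : A0 (w : E) = -((A - A0) (w : E)) := by
        simp [ContinuousLinearMap.sub_apply, hw']
      rw [this, norm_neg]
      exact (A - A0).le_opNorm _
    have hA' : ‖A - A0‖ * ‖(w : E)‖ < (K:ℝ)⁻¹ * ‖(w : E)‖ :=
      mul_lt_mul_of_pos_right hA hnorm
    have : ‖(w : E)‖ < ‖(w : E)‖ := by
      calc ‖(w : E)‖ ≤ (K:ℝ) * ‖A0 (w : E)‖ := e1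
        _ ≤ (K:ℝ) * (‖A - A0‖ * ‖(w : E)‖) := by
            exact mul_le_mul_of_nonneg_left e2 (le_of_lt hK0')
        _ < (K:ℝ) * ((K:ℝ)⁻¹ * ‖(w : E)‖) := mul_lt_mul_of_pos_left hA' hK0'
        _ = ‖(w : E)‖ := by field_simp
    exact lt_irrefl _ this
  -- dimension count
  have h1 : finrank ℝ W = finrank ℝ (LinearMap.range A0.toLinearMap) := by
    have h2 := LinearMap.finrank_range_add_finrank_ker A0.toLinearMap
    have h3 : finrank ℝ (LinearMap.ker A0.toLinearMap) + finrank ℝ W = finrank ℝ E :=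
      Submodule.finrank_add_finrank_orthogonal _
    omega
  have h4 : finrank ℝ (LinearMap.range (A.toLinearMap ∘ₗ W.subtype)) = finrank ℝ W := by
    have h6 := LinearMap.finrank_range_add_finrank_ker (A.toLinearMap ∘ₗ W.subtype)
    rw [hAinj] at h6
    simpa using h6
  have h5 : LinearMap.range (A.toLinearMap ∘ₗ W.subtype) ≤ LinearMap.range A.toLinearMap := by
    rw [LinearMap.range_comp]
    exact LinearMap.map_le_range
  calc finrank ℝ (LinearMap.range A0.toLinearMap) = finrank ℝ W := h1.symm
    _ = finrank ℝ (LinearMap.range (A.toLinearMap ∘ₗ W.subtype)) := h4.symm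
    _ ≤ finrank ℝ (LinearMap.range A.toLinearMap) := Submodule.finrank_mono h5

set_option synthInstance.maxHeartbeats 1000000 in
set_option maxHeartbeats 1000000 in
lemma key_d (n m : ℕ) (nj : Fin m → ℕ) (p : Fin m → ℝ)
    (hp : ∀ j, p j ∈ Set.Icc (0 : ℝ) 1)
    (L0 : ∀ j, EuclideanSpace ℝ (Fin n) →L[ℝ] EuclideanSpace ℝ (Fin (nj j)))
    (hdim : ∀ V : Submodule ℝ (EuclideanSpace ℝ (Fin n)),
      (Module.finrank ℝ V : ℝ) ≤
        ∑ j, p j * (Module.finrank ℝ (V.map (L0 j).toLinearMap) : ℝ))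
    (d : ℕ) :
    ∃ δ > (0 : ℝ),
      ∀ L : ∀ j, EuclideanSpace ℝ (Fin n) →L[ℝ] EuclideanSpace ℝ (Fin (nj j)),
        (∀ j, ‖L j - L0 j‖ < δ) →
        ∀ V : Submodule ℝ (EuclideanSpace ℝ (Fin n)), finrank ℝ V = d →
          (Module.finrank ℝ V : ℝ) ≤
            ∑ j, p j * (Module.finrank ℝ (V.map (L j).toLinearMap) : ℝ) := by
  classical
  set H := EuclideanSpace ℝ (Fin n) with hH
  -- trace as a linear map on continuous endomorphisms
  set trCL : (H →L[ℝ] H) →ₗ[ℝ] ℝ :=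
    (LinearMap.trace ℝ H) ∘ₗ (ContinuousLinearMap.coeLM ℝ) with htrCL
  -- the compact set of projections of trace d
  set T : Set (H →L[ℝ] H) :=
    {P | P * P = P ∧ ‖P‖ ≤ 1 ∧ trCL P = (d:ℝ)} with hT
  have hTclosed : IsClosed T := by
    have h1 : IsClosed {P : H →L[ℝ] H | P * P = P} := by
      exact isClosed_eq (continuous_id.mul continuous_id) continuous_id
    have h2 : IsClosed {P : H →L[ℝ] H | ‖P‖ ≤ (1:ℝ)} :=
      isClosed_le continuous_norm continuous_const
    have h3 : IsClosed {P : H →L[ℝ] H | trCL P = (d:ℝ)} :=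
      isClosed_eq trCL.continuous_of_finiteDimensional continuous_const
    have : T = {P : H →L[ℝ] H | P * P = P} ∩
        ({P : H →L[ℝ] H | ‖P‖ ≤ (1:ℝ)} ∩ {P : H →L[ℝ] H | trCL P = (d:ℝ)}) := by
      ext P; simp [hT, Set.mem_setOf_eq, and_assoc]
    rw [this]
    exact h1.inter (h2.inter h3)
  have hTbdd : Bornology.IsBounded T := by
    apply (Metric.isBounded_closedBall (x := (0 : H →L[ℝ] H)) (r := 1)).subset
    intro P hP
    exact mem_closedBall_zero_iff.mpr hP.2.1
  have hTcompact : IsCompact T := Metric.isCompact_of_isClosed_isBounded hTclosed hTbdd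
  -- for each P, a uniform lower-semicontinuity radius for all j
  have hlsc : ∀ P : H →L[ℝ] H, ∃ ε > (0:ℝ), ∀ j,
      ∀ A : H →L[ℝ] EuclideanSpace ℝ (Fin (nj j)), ‖A - (L0 j).comp P‖ < ε →
        finrank ℝ (LinearMap.range ((L0 j).comp P).toLinearMap) ≤
          finrank ℝ (LinearMap.range A.toLinearMap) := by
    intro P
    choose e he using fun j => rank_lsc ((L0 j).comp P)
    obtain ⟨ε, hε, hle⟩ := exists_pos_le_finset Finset.univ e (fun j _ => (he j).1)
    exact ⟨ε, hε, fun j A hA =>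
      (he j).2 A (lt_of_lt_of_le hA (hle j (Finset.mem_univ j)))⟩
  choose ε hεpos hεlsc using hlsc
  -- bound on the norms of the L0 j
  set Ms : Finset ℝ := insert (0:ℝ) (Finset.univ.image fun j => ‖L0 j‖) with hMs
  set M : ℝ := Ms.max' ⟨0, Finset.mem_insert_self _ _⟩ with hM
  have hM0 : (0:ℝ) ≤ M := by
    rw [hM]; exact Finset.le_max' _ _ (by rw [hMs]; exact Finset.mem_insert_self _ _)
  have hMj : ∀ j, ‖L0 j‖ ≤ M := fun j => by
    rw [hM]
    exact Finset.le_max' _ _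
      (by rw [hMs]; exact Finset.mem_insert_of_mem (Finset.mem_image_of_mem _ (Finset.mem_univ j)))
  -- radii and finite subcover
  set r : (H →L[ℝ] H) → ℝ := fun P => ε P / (2 * (M + 1)) with hr
  have hrpos : ∀ P, 0 < r P := fun P => by
    have := hεpos P; rw [hr]; positivity
  obtain ⟨t, ht1, ht2⟩ := hTcompact.elim_nhds_subcover (fun P => Metric.ball P (r P))
    (fun P _ => Metric.ball_mem_nhds P (hrpos P))
  obtain ⟨δ, hδpos, hδ⟩ := exists_pos_le_finset t (fun P => ε P / 2)
    (fun P _ => by have := hεpos P; positivity)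
  refine ⟨δ, hδpos, fun L hL V hV => ?_⟩
  -- the orthogonal projection onto V
  set Q : H →L[ℝ] H := V.subtypeL.comp V.orthogonalProjectionOnto with hQ
  have hQmem : ∀ x, Q x ∈ V := fun x => (V.orthogonalProjectionOnto x).2
  have hQid : ∀ x ∈ V, Q x = x := fun x hx => by
    have := Submodule.starProjection_eq_self_iff.mpr hx
    rw [Submodule.starProjection_apply] at this
    exact this
  have hQidem : Q * Q = Q := ContinuousLinearMap.ext fun x => by
    rw [ContinuousLinearMap.mul_apply]; exact hQid _ (hQmem x)
  have hQnorm : ‖Q‖ ≤ 1 := by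
    have h1 := ContinuousLinearMap.opNorm_comp_le V.subtypeL V.orthogonalProjectionOnto
    have h2 := Submodule.norm_subtypeL_le V
    have h3 := Submodule.orthogonalProjectionOnto_norm_le V
    have h4 := norm_nonneg V.orthogonalProjectionOnto
    nlinarith
  have hQproj : LinearMap.IsProj V Q.toLinearMap := ⟨hQmem, hQid⟩
  have hQtr : trCL Q = (d:ℝ) := by
    show LinearMap.trace ℝ H Q.toLinearMap = (d:ℝ)
    rw [hQproj.trace, hV]
  have hQT : Q ∈ T := ⟨hQidem, hQnorm, hQtr⟩
  obtain ⟨P, hPt, hQball⟩ := Set.mem_iUnion₂.mp (ht2 hQT)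
  obtain ⟨hPidem, hPnorm, hPtr⟩ := ht1 P hPt
  set VP : Submodule ℝ H := LinearMap.range P.toLinearMap with hVPdef
  have hPproj : LinearMap.IsProj VP P.toLinearMap := by
    refine ⟨fun x => LinearMap.mem_range_self _ x, ?_⟩
    rintro _ ⟨y, rfl⟩
    have := ContinuousLinearMap.ext_iff.mp hPidem y
    rw [ContinuousLinearMap.mul_apply] at this
    exact this
  have hVP : finrank ℝ VP = d := by
    have h8 : (finrank ℝ VP : ℝ) = (d:ℝ) := by
      rw [← hPproj.trace]; exact hPtr
    exact_mod_cast h8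
  have hQrange : LinearMap.range Q.toLinearMap = V := by
    refine le_antisymm ?_ ?_
    · rintro _ ⟨y, rfl⟩; exact hQmem y
    · intro x hx; exact ⟨x, hQid x hx⟩
  have hjkey : ∀ j, finrank ℝ (VP.map (L0 j).toLinearMap) ≤
      finrank ℝ (V.map (L j).toLinearMap) := by
    intro j
    have hdist : ‖Q - P‖ < r P := by
      have := Metric.mem_ball.mp hQball; rwa [dist_eq_norm] at this
    have key : ‖(L j).comp Q - (L0 j).comp P‖ < ε P := by
      have e : (L j).comp Q - (L0 j).comp P
          = (L j - L0 j).comp Q + (L0 j).comp (Q - P) := by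
        rw [ContinuousLinearMap.sub_comp, ContinuousLinearMap.comp_sub]; abel
      have hb2 : ‖(L0 j).comp (Q - P)‖ ≤ M * r P :=
        le_trans (ContinuousLinearMap.opNorm_comp_le _ _)
          (mul_le_mul (hMj j) (le_of_lt hdist) (norm_nonneg _) hM0)
      have hb1 : ‖(L j - L0 j).comp Q‖ < ε P / 2 :=
        lt_of_le_of_lt
          (le_trans (ContinuousLinearMap.opNorm_comp_le _ _)
            (mul_le_of_le_one_right (norm_nonneg _) hQnorm))
          (lt_of_lt_of_le (hL j) (hδ P hPt))
      have hb3 : M * r P ≤ ε P / 2 := by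
        rw [hr]
        rw [mul_div_assoc', div_le_div_iff₀ (by positivity) (by norm_num)]
        nlinarith [hεpos P, hM0]
      calc ‖(L j).comp Q - (L0 j).comp P‖
          = ‖(L j - L0 j).comp Q + (L0 j).comp (Q - P)‖ := by rw [e]
        _ ≤ ‖(L j - L0 j).comp Q‖ + ‖(L0 j).comp (Q - P)‖ := norm_add_le _ _
        _ < ε P := by have := le_trans hb2 hb3; linarith
    have h := hεlsc P j ((L j).comp Q) key
    rwa [ContinuousLinearMap.toLinearMap_comp, ContinuousLinearMap.toLinearMap_comp,
      LinearMap.range_comp, LinearMap.range_comp, hQrange, ← hVPdef] at h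
  rw [hV]
  calc (d:ℝ) ≤ ∑ j, p j * (finrank ℝ (VP.map (L0 j).toLinearMap) : ℝ) := by
        rw [← hVP]; exact hdim VP
    _ ≤ ∑ j, p j * (finrank ℝ (V.map (L j).toLinearMap) : ℝ) :=
        Finset.sum_le_sum fun j _ =>
          mul_le_mul_of_nonneg_left (Nat.cast_le.mpr (hjkey j)) (hp j).1


/-- Openness of the Brascamp--Lieb dimension condition in the linear maps. -/
theorem brascamp_lieb_dimension_condition_open
    (n m : ℕ) (nj : Fin m → ℕ) (p : Fin m → ℝ)
    (hp : ∀ j, p j ∈ Set.Icc (0 : ℝ) 1)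
    (L0 : ∀ j, EuclideanSpace ℝ (Fin n) →L[ℝ] EuclideanSpace ℝ (Fin (nj j)))
    (hsurj : ∀ j, Function.Surjective (L0 j))
    (hdim : ∀ V : Submodule ℝ (EuclideanSpace ℝ (Fin n)),
      (Module.finrank ℝ V : ℝ) ≤
        ∑ j, p j * (Module.finrank ℝ (V.map (L0 j).toLinearMap) : ℝ)) :
    ∃ δ > (0 : ℝ),
      ∀ L : ∀ j, EuclideanSpace ℝ (Fin n) →L[ℝ] EuclideanSpace ℝ (Fin (nj j)),
        (∀ j, ‖L j - L0 j‖ < δ) →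
        ∀ V : Submodule ℝ (EuclideanSpace ℝ (Fin n)),
          (Module.finrank ℝ V : ℝ) ≤
            ∑ j, p j * (Module.finrank ℝ (V.map (L j).toLinearMap) : ℝ) := by
  choose δd hδdpos hδd using key_d n m nj p hp L0 hdim
  obtain ⟨δ, hδpos, hδ⟩ := exists_pos_le_finset (Finset.range (n+1)) δd
    (fun d _ => hδdpos d)
  refine ⟨δ, hδpos, fun L hL V => ?_⟩
  have hd : Module.finrank ℝ V ≤ n := by
    have h1 := Submodule.finrank_le V
    rwa [finrank_euclideanSpace_fin] at h1
  have hmem : Module.finrank ℝ V ∈ Finset.range (n+1) :=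
    Finset.mem_range.mpr (Nat.lt_succ_of_le hd)
  exact hδd (Module.finrank ℝ V) L
    (fun j => lt_of_lt_of_le (hL j) (hδ _ hmem)) V rfl
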